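/- Let M be a smooth (C^∞) manifold without boundary modeled on a finite-dimensional real normed vector space, let I : M → M be a smooth involution (I ∘ I = id) with no fixed points (I x ≠ x for all x), and let F : M → ℝ be a smooth function satisfying F (I x) = - F x for all x ∈ M. Assume that F takes distinct values at distinct critical points: for all p ≠ q with mfderiv F p = 0 and mfderiv F q = 0 one has F p ≠ F q. Then 0 is not a critical value of F; that is, there is no point p ∈ M with mfderiv F p = 0 and F p = 0. -/

import Mathlib

open Manifold

/-- If `F` is a smooth function, odd with respect to a fixed-point-free smooth
involution `I`, taking distinct values at distinct critical points, then `0` is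
not a critical value of `F`. -/
theorem stmt_10 {E : Type*} [NormedAddCommGroup E] [NormedSpace ℝ E]
    [FiniteDimensional ℝ E]
    {M : Type*} [TopologicalSpace M] [ChartedSpace E M]
    [IsManifold 𝓘(ℝ, E) (⊤ : ℕ∞) M]
    (I : M → M) (hI : ContMDiff 𝓘(ℝ, E) 𝓘(ℝ, E) (⊤ : ℕ∞) I)
    (hinv : I ∘ I = id) (hfix : ∀ x, I x ≠ x)
    (F : M → ℝ) (hF : ContMDiff 𝓘(ℝ, E) 𝓘(ℝ, ℝ) (⊤ : ℕ∞) F)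
    (hodd : ∀ x, F (I x) = - F x)
    (hsimple : ∀ p q : M, p ≠ q →
      mfderiv 𝓘(ℝ, E) 𝓘(ℝ, ℝ) F p = 0 → mfderiv 𝓘(ℝ, E) 𝓘(ℝ, ℝ) F q = 0 →
      F p ≠ F q) :
    ¬ ∃ p : M, mfderiv 𝓘(ℝ, E) 𝓘(ℝ, ℝ) F p = 0 ∧ F p = 0 := by
  rintro ⟨p, hp, hFp⟩
  have hImd : ∀ x, MDifferentiableAt 𝓘(ℝ, E) 𝓘(ℝ, E) I x :=
    fun x => hI.mdifferentiableAt (by simp)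
  have hFmd : ∀ x, MDifferentiableAt 𝓘(ℝ, E) 𝓘(ℝ, ℝ) F x :=
    fun x => hF.mdifferentiableAt (by simp)
  set q := I p with hqdef
  have hIq : I q = p := congrFun hinv p
  have hqF : F q = 0 := by rw [hqdef, hodd, hFp, neg_zero]
  -- mfderiv of F ∘ I at p is zero since F ∘ I = -F
  have hFI : F ∘ I = -F := by
    funext x; simpa using hodd x
  have hchain1 : mfderiv 𝓘(ℝ, E) 𝓘(ℝ, ℝ) (F ∘ I) p
      = (mfderiv 𝓘(ℝ, E) 𝓘(ℝ, ℝ) F q).comp (mfderiv 𝓘(ℝ, E) 𝓘(ℝ, E) I p) :=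
    mfderiv_comp p (hFmd q) (hImd p)
  have hzero : (mfderiv 𝓘(ℝ, E) 𝓘(ℝ, ℝ) F q).comp (mfderiv 𝓘(ℝ, E) 𝓘(ℝ, E) I p) = 0 := by
    rw [← hchain1, hFI, mfderiv_neg, hp, neg_zero]; rfl
  -- chain rule for I ∘ I at q gives a right inverse for mfderiv I p
  have hchain2 : mfderiv 𝓘(ℝ, E) 𝓘(ℝ, E) (I ∘ I) q
      = (mfderiv 𝓘(ℝ, E) 𝓘(ℝ, E) I (I q)).comp (mfderiv 𝓘(ℝ, E) 𝓘(ℝ, E) I q) :=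
    mfderiv_comp q (hImd (I q)) (hImd q)
  have hid : (mfderiv 𝓘(ℝ, E) 𝓘(ℝ, E) I p).comp (mfderiv 𝓘(ℝ, E) 𝓘(ℝ, E) I q)
      = ContinuousLinearMap.id ℝ (TangentSpace 𝓘(ℝ, E) q) := by
    rw [← hIq]
    rw [← hchain2, hinv, mfderiv_id]
  have hcrit : mfderiv 𝓘(ℝ, E) 𝓘(ℝ, ℝ) F q = 0 := by
    have : (mfderiv 𝓘(ℝ, E) 𝓘(ℝ, ℝ) F q).comp
        ((mfderiv 𝓘(ℝ, E) 𝓘(ℝ, E) I p).comp (mfderiv 𝓘(ℝ, E) 𝓘(ℝ, E) I q)) = 0 := by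
      exact (ContinuousLinearMap.comp_assoc _ _ _).symm.trans (by rw [hzero]; exact ContinuousLinearMap.zero_comp _)
    rwa [hid, ContinuousLinearMap.comp_id] at this
  exact hsimple q p (hfix p) hcrit hp (by rw [hqF, hFp])
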